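/- arXiv:1112.5629 — 2 statements merged into one kernel-verified Lean document; each statement's English description precedes it below -/
import Mathlib

section
/- Let y ∈ ℝ^n be a nonzero vector whose coherence satisfies μ(y) ≤ μ₁, i.e., n‖y‖_∞² ≤ μ₁‖y‖₂². Let I₁,…,I_q be independent random indices, each uniformly distributed on {1,…,n}, and set S = Σ_{j=1}^q y_{I_j}². Then for every t > 0, P( | (n/q)·S − ‖y‖₂² | ≥ t ) ≤ 2·exp( − q t² / (2 μ₁² ‖y‖₂⁴) ). -/
open scoped BigOperators ENNReal
open MeasureTheory ProbabilityTheory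

lemma my_mgf_le {Ω : Type*} [MeasurableSpace Ω] (μ : Measure Ω)
    [IsProbabilityMeasure μ] (W : Ω → ℝ) (hW : Integrable W μ) (c s : ℝ) (hc : 0 < c)
    (hb : ∀ ω, |W ω| ≤ c) (hmean : ∫ ω, W ω ∂μ = 0) :
    mgf W μ s ≤ Real.exp (s ^ 2 * c ^ 2 / 2) := by
  have hpt : ∀ ω, Real.exp (s * W ω) ≤
      Real.cosh (s * c) + (W ω / c) * Real.sinh (s * c) := by
    intro ω
    set w := W ω with hw'
    have hw1 := (abs_le.mp (hb ω)).1
    have hw2 := (abs_le.mp (hb ω)).2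
    have ha : (0:ℝ) ≤ (c - w) / (2 * c) := by
      apply div_nonneg <;> linarith
    have hb' : (0:ℝ) ≤ (c + w) / (2 * c) := by
      apply div_nonneg <;> linarith
    have hab : (c - w) / (2 * c) + (c + w) / (2 * c) = 1 := by
      field_simp
      ring
    have hconv := convexOn_exp.2 (Set.mem_univ (-(s * c))) (Set.mem_univ (s * c)) ha hb' hab
    have harg : ((c - w) / (2 * c)) • (-(s * c)) + ((c + w) / (2 * c)) • (s * c) = s * w := by
      simp only [smul_eq_mul]
      field_simp
      ring
    rw [harg] at hconv
    simp only [smul_eq_mul] at hconv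
    calc Real.exp (s * w) ≤ (c - w) / (2 * c) * Real.exp (-(s * c))
          + (c + w) / (2 * c) * Real.exp (s * c) := hconv
      _ = Real.cosh (s * c) + (w / c) * Real.sinh (s * c) := by
          rw [Real.cosh_eq, Real.sinh_eq]
          field_simp
          ring
  have hint : Integrable (fun ω => Real.exp (s * W ω)) μ := by
    refine Integrable.mono' (integrable_const (Real.exp (|s| * c)))
      (Real.continuous_exp.comp_aestronglyMeasurable
        (aestronglyMeasurable_const.mul hW.aestronglyMeasurable)) ?_
    refine ae_of_all _ fun ω => ?_
    rw [Real.norm_eq_abs, Real.abs_exp, Real.exp_le_exp]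
    calc s * W ω ≤ |s * W ω| := le_abs_self _
      _ = |s| * |W ω| := abs_mul _ _
      _ ≤ |s| * c := by
          exact mul_le_mul_of_nonneg_left (hb ω) (abs_nonneg s)
  have hint2 : Integrable (fun ω => (W ω / c) * Real.sinh (s * c)) μ :=
    (hW.div_const c).mul_const _
  have key : mgf W μ s ≤ Real.cosh (s * c) := by
    have h := integral_mono hint ((integrable_const _).add hint2) hpt
    simp only [Pi.add_apply] at h
    rw [integral_add (integrable_const _) hint2, integral_const, probReal_univ,
      one_smul, integral_mul_const _, integral_div, hmean,
      zero_div, zero_mul, add_zero] at h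
    exact h
  calc mgf W μ s ≤ Real.cosh (s * c) := key
    _ ≤ Real.exp ((s * c) ^ 2 / 2) := Real.cosh_le_exp_half_sq _
    _ = Real.exp (s ^ 2 * c ^ 2 / 2) := by rw [mul_pow]

lemma my_integral_comp_fin {Θ : Type*} [MeasurableSpace Θ] (μ : Measure Θ)
    [IsProbabilityMeasure μ] {n : ℕ} (f : Θ → Fin n) (hf : Measurable f) (g : Fin n → ℝ) :
    ∫ θ, g (f θ) ∂μ = ∑ i, g i * (μ {θ | f θ = i}).toReal := by
  have hms : ∀ i : Fin n, MeasurableSet {θ | f θ = i} := fun i =>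
    hf (measurableSet_singleton i)
  have hrepr : (fun θ => g (f θ)) =
      fun θ => ∑ i, Set.indicator {θ' | f θ' = i} (fun _ => g i) θ := by
    funext θ
    rw [Finset.sum_eq_single (f θ)]
    · simp [Set.indicator_of_mem, Set.mem_setOf_eq]
    · intro i _ hi
      apply Set.indicator_of_notMem
      simp only [Set.mem_setOf_eq]
      exact fun h => hi h.symm
    · simp
  rw [hrepr, integral_finset_sum]
  · refine Finset.sum_congr rfl fun i _ => ?_
    rw [integral_indicator_const _ (hms i), smul_eq_mul, mul_comm, measureReal_def]
  · intro i _
    exact (integrable_const (g i)).indicator (hms i)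

/-- Let `y ∈ ℝ^n` be nonzero with coherence at most `μ₁`, i.e.
`n ‖y‖_∞² ≤ μ₁ ‖y‖₂²` (equivalently `n·y i² ≤ μ₁·‖y‖₂²` for every `i`).  If `I 1,…,I q` are
independent uniform random indices in `{1,…,n}` and `S = ∑ j, y (I j)²`, then for every `t > 0`,
`P(|(n/q)·S − ‖y‖₂²| ≥ t) ≤ 2 exp(−q t² / (2 μ₁² ‖y‖₂⁴))`. -/
theorem stmt1 {Θ : Type*} [MeasurableSpace Θ] (μ : Measure Θ) [IsProbabilityMeasure μ]
    (n q : ℕ) (hn : 0 < n) (hq : 0 < q)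
    (y : Fin n → ℝ) (hy : y ≠ 0)
    (μ₁ : ℝ) (hcoh : ∀ i, (n : ℝ) * (y i) ^ 2 ≤ μ₁ * ∑ i', (y i') ^ 2)
    (I : Fin q → Θ → Fin n) (hmeas : ∀ j, Measurable (I j))
    (hindep : iIndepFun I μ)
    (hunif : ∀ j i, μ {θ | I j θ = i} = (n : ℝ≥0∞)⁻¹)
    (t : ℝ) (ht : 0 < t) :
    μ {θ | t ≤ |(n : ℝ) / (q : ℝ) * (∑ j, (y (I j θ)) ^ 2) - ∑ i, (y i) ^ 2|} ≤
      ENNReal.ofReal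
        (2 * Real.exp (-(q : ℝ) * t ^ 2 / (2 * μ₁ ^ 2 * (∑ i, (y i) ^ 2) ^ 2))) := by
  classical
  set E : ℝ := ∑ i, (y i) ^ 2 with hE
  have hnR : (0:ℝ) < n := Nat.cast_pos.mpr hn
  have hqR : (0:ℝ) < q := Nat.cast_pos.mpr hq
  have hEpos : 0 < E := by
    obtain ⟨i, hi⟩ : ∃ i, y i ≠ 0 := by
      by_contra h; push_neg at h; exact hy (funext h)
    exact Finset.sum_pos' (fun i _ => sq_nonneg _)
      ⟨i, Finset.mem_univ i, by positivity⟩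
  have hμ₁ : 1 ≤ μ₁ := by
    obtain ⟨i₀, -, hi₀⟩ := Finset.exists_max_image Finset.univ (fun i => (y i) ^ 2)
      ⟨⟨0, hn⟩, Finset.mem_univ _⟩
    have h1 : E ≤ (n:ℝ) * (y i₀) ^ 2 := by
      calc E = ∑ i, (y i) ^ 2 := rfl
        _ ≤ ∑ _i : Fin n, (y i₀) ^ 2 :=
            Finset.sum_le_sum fun i _ => hi₀ i (Finset.mem_univ i)
        _ = (n:ℝ) * (y i₀) ^ 2 := by simp [mul_comm]
    have h2 := hcoh i₀
    nlinarith
  set c : ℝ := μ₁ * E / q with hc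
  have hcpos : 0 < c := by positivity
  -- the centered variables
  set φ : Fin n → ℝ := fun v => (n:ℝ) / q * (y v) ^ 2 - E / q with hφ
  set Z : Fin q → Θ → ℝ := fun j => φ ∘ I j with hZ
  have hZmeas : ∀ j, Measurable (Z j) := fun j =>
    (measurable_of_countable φ).comp (hmeas j)
  have hφbound : ∀ v, |φ v| ≤ c := by
    intro v
    have h1 : (n:ℝ) * (y v) ^ 2 ≤ μ₁ * E := hcoh v
    have h2 : 0 ≤ (n:ℝ) / q * (y v) ^ 2 := by positivity
    have h3 : (n:ℝ) / q * (y v) ^ 2 ≤ c := by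
      rw [hc, div_mul_eq_mul_div, div_le_div_iff₀ hqR hqR]
      nlinarith
    have h4 : E / q ≤ c := by
      rw [hc]
      gcongr
      nlinarith
    have h5 : 0 ≤ E / q := by positivity
    rw [abs_le]
    constructor <;> simp only [hφ] <;> nlinarith
  have hZbound : ∀ j ω, |Z j ω| ≤ c := fun j ω => hφbound (I j ω)
  have hZint : ∀ j, Integrable (Z j) μ := by
    intro j
    refine Integrable.mono' (integrable_const c) (hZmeas j).aestronglyMeasurable
      (ae_of_all _ fun ω => ?_)
    rw [Real.norm_eq_abs]; exact hZbound j ω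
  have hZmean : ∀ j, ∫ θ, Z j θ ∂μ = 0 := by
    intro j
    have : ∫ θ, Z j θ ∂μ = ∑ i, φ i * (μ {θ | I j θ = i}).toReal :=
      my_integral_comp_fin μ (I j) (hmeas j) φ
    rw [this]
    have htoR : ∀ i : Fin n, (μ {θ | I j θ = i}).toReal = (n:ℝ)⁻¹ := by
      intro i
      rw [hunif j i, ENNReal.toReal_inv, ENNReal.toReal_natCast]
    simp only [htoR]
    rw [← Finset.sum_mul]
    have hsum0 : ∑ i, φ i = 0 := by
      simp only [hφ, Finset.sum_sub_distrib, ← Finset.mul_sum, ← hE]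
      rw [Finset.sum_const, Finset.card_univ, Fintype.card_fin, nsmul_eq_mul]
      field_simp
      ring
    rw [hsum0, zero_mul]
  -- independence of the Z's
  have hZindep : iIndepFun Z μ :=
    hindep.comp (fun _ => φ) (fun _ => measurable_of_countable φ)
  -- mgf bound for the sum
  have hmgf_sum : ∀ s : ℝ, mgf (∑ j, Z j) μ s ≤ Real.exp ((q:ℝ) * (s ^ 2 * c ^ 2 / 2)) := by
    intro s
    rw [hZindep.mgf_sum hZmeas Finset.univ]
    calc ∏ j, mgf (Z j) μ s ≤ ∏ _j : Fin q, Real.exp (s ^ 2 * c ^ 2 / 2) := by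
          refine Finset.prod_le_prod (fun j _ => mgf_nonneg) fun j _ => ?_
          exact my_mgf_le μ (Z j) (hZint j) c s hcpos (hZbound j) (hZmean j)
      _ = Real.exp ((q:ℝ) * (s ^ 2 * c ^ 2 / 2)) := by
          rw [Finset.prod_const, Finset.card_univ, Fintype.card_fin, ← Real.exp_nat_mul]
  have hint_exp : ∀ s : ℝ, Integrable (fun ω => Real.exp (s * (∑ j, Z j) ω)) μ := by
    intro s
    refine hZindep.integrable_exp_mul_sum hZmeas fun j _ => ?_
    refine Integrable.mono' (integrable_const (Real.exp (|s| * c)))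
      (Real.continuous_exp.comp_aestronglyMeasurable
        (aestronglyMeasurable_const.mul (hZmeas j).aestronglyMeasurable))
      (ae_of_all _ fun ω => ?_)
    rw [Real.norm_eq_abs, Real.abs_exp, Real.exp_le_exp]
    calc s * Z j ω ≤ |s * Z j ω| := le_abs_self _
      _ = |s| * |Z j ω| := abs_mul _ _
      _ ≤ |s| * c := mul_le_mul_of_nonneg_left (hZbound j ω) (abs_nonneg s)
  set s : ℝ := t / ((q:ℝ) * c ^ 2) with hs
  have hspos : 0 < s := by positivity
  have hexp_eq : -s * t + (q:ℝ) * (s ^ 2 * c ^ 2 / 2) =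
      -(q:ℝ) * t ^ 2 / (2 * μ₁ ^ 2 * E ^ 2) := by
    rw [hs, hc]
    field_simp
    ring
  set B : ℝ := Real.exp (-(q:ℝ) * t ^ 2 / (2 * μ₁ ^ 2 * E ^ 2)) with hB
  have hup : (μ {θ | t ≤ (∑ j, Z j) θ}).toReal ≤ B := by
    calc (μ {θ | t ≤ (∑ j, Z j) θ}).toReal
        ≤ Real.exp (-s * t) * mgf (∑ j, Z j) μ s :=
          measure_ge_le_exp_mul_mgf t hspos.le (hint_exp s)
      _ ≤ Real.exp (-s * t) * Real.exp ((q:ℝ) * (s ^ 2 * c ^ 2 / 2)) := by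
          exact mul_le_mul_of_nonneg_left (hmgf_sum s) (Real.exp_pos _).le
      _ = B := by rw [← Real.exp_add, hexp_eq]
  have hlo : (μ {θ | (∑ j, Z j) θ ≤ -t}).toReal ≤ B := by
    calc (μ {θ | (∑ j, Z j) θ ≤ -t}).toReal
        ≤ Real.exp (-(-s) * (-t)) * mgf (∑ j, Z j) μ (-s) :=
          measure_le_le_exp_mul_mgf (-t) (by linarith) (hint_exp (-s))
      _ ≤ Real.exp (-s * t) * Real.exp ((q:ℝ) * ((-s) ^ 2 * c ^ 2 / 2)) := by
          rw [show -(-s) * (-t) = -s * t by ring]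
          exact mul_le_mul_of_nonneg_left (hmgf_sum (-s)) (Real.exp_pos _).le
      _ = B := by
          rw [show ((-s : ℝ)) ^ 2 = s ^ 2 by ring, ← Real.exp_add, hexp_eq]
  -- identify the event
  have hevent : {θ | t ≤ |(n : ℝ) / (q : ℝ) * (∑ j, (y (I j θ)) ^ 2) - E|} ⊆
      {θ | t ≤ (∑ j, Z j) θ} ∪ {θ | (∑ j, Z j) θ ≤ -t} := by
    intro θ hθ
    have hsum : (∑ j, Z j) θ = (n : ℝ) / (q : ℝ) * (∑ j, (y (I j θ)) ^ 2) - E := by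
      rw [Finset.sum_apply]
      simp only [hZ, hφ, Function.comp_apply]
      rw [Finset.sum_sub_distrib, ← Finset.mul_sum, Finset.sum_const, Finset.card_univ,
        Fintype.card_fin, nsmul_eq_mul]
      field_simp
    simp only [Set.mem_setOf_eq] at hθ
    rcases le_abs.mp hθ with h | h
    · left
      simp only [Set.mem_setOf_eq, hsum]
      exact h
    · right
      simp only [Set.mem_setOf_eq, hsum]
      linarith
  have hofB : ∀ A : Set Θ, (μ A).toReal ≤ B → μ A ≤ ENNReal.ofReal B := by
    intro A hA
    exact (ENNReal.le_ofReal_iff_toReal_le (measure_ne_top μ A) (Real.exp_pos _).le).mpr hA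
  calc μ {θ | t ≤ |(n : ℝ) / (q : ℝ) * (∑ j, (y (I j θ)) ^ 2) - E|}
      ≤ μ ({θ | t ≤ (∑ j, Z j) θ} ∪ {θ | (∑ j, Z j) θ ≤ -t}) := measure_mono hevent
    _ ≤ μ {θ | t ≤ (∑ j, Z j) θ} + μ {θ | (∑ j, Z j) θ ≤ -t} := measure_union_le _ _
    _ ≤ ENNReal.ofReal B + ENNReal.ofReal B := add_le_add (hofB _ hup) (hofB _ hlo)
    _ = ENNReal.ofReal (2 * B) := by
        rw [← ENNReal.ofReal_add (Real.exp_pos _).le (Real.exp_pos _).le]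
        congr 1
        ring
    _ = ENNReal.ofReal (2 * Real.exp (-(q:ℝ) * t ^ 2 / (2 * μ₁ ^ 2 * E ^ 2))) := rfl
end

section
/- (Lemma 3 of the paper.) Let y ∈ ℝ^n be a nonzero vector whose coherence satisfies μ(y) ≤ μ₁, i.e., n‖y‖_∞² ≤ μ₁‖y‖₂². Let 0 < δ₀ < 1, let q be an integer with q ≥ 8 μ₁² log(2/δ₀) and q ≤ n, and let ω be a subset of {1,…,n} of size q chosen uniformly at random. Then with probability at least 1 − δ₀, (1/2)‖y‖₂² ≤ (n/q) Σ_{i∈ω} y_i² ≤ (3/2)‖y‖₂². -/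
open scoped BigOperators ENNReal

section Aux
open Finset Real

lemma count_identity {α : Type*} [DecidableEq α] (R : Finset α) (k : ℕ) (F : Finset α → ℝ) :
    ((k+1 : ℕ) : ℝ) * ∑ ω ∈ R.powersetCard (k+1), F ω
      = ∑ v ∈ R, ∑ ω ∈ (R.erase v).powersetCard k, F (insert v ω) := by
  rw [Finset.mul_sum]
  have h1 : ∀ ω ∈ R.powersetCard (k+1), ((k+1:ℕ):ℝ) * F ω = ∑ _v ∈ ω, F ω := by
    intro ω hω
    rw [Finset.sum_const, (Finset.mem_powersetCard.1 hω).2]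
    simp [nsmul_eq_mul]
  rw [Finset.sum_congr rfl h1, Finset.sum_sigma', Finset.sum_sigma']
  refine Finset.sum_bij' (fun p _ => (⟨p.2, p.1.erase p.2⟩ : Σ _ : α, Finset α))
    (fun p _ => (⟨insert p.1 p.2, p.1⟩ : Σ _ : Finset α, α)) ?_ ?_ ?_ ?_ ?_
  · rintro ⟨ω, v⟩ hp
    simp only [Finset.mem_sigma] at hp ⊢
    obtain ⟨h1, h2⟩ := hp
    obtain ⟨hsub, hcard⟩ := Finset.mem_powersetCard.1 h1
    exact ⟨hsub h2, Finset.mem_powersetCard.2 ⟨Finset.erase_subset_erase _ hsub,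
      by rw [Finset.card_erase_of_mem h2, hcard]; rfl⟩⟩
  · rintro ⟨v, ω⟩ hp
    simp only [Finset.mem_sigma] at hp ⊢
    obtain ⟨h1, h2⟩ := hp
    obtain ⟨hsub, hcard⟩ := Finset.mem_powersetCard.1 h2
    have hv : v ∉ ω := fun hv => Finset.notMem_erase v R (hsub hv)
    refine ⟨Finset.mem_powersetCard.2 ⟨?_, by rw [Finset.card_insert_of_notMem hv, hcard]⟩,
      Finset.mem_insert_self _ _⟩
    intro x hx
    rcases Finset.mem_insert.1 hx with rfl | hx
    · exact h1
    · exact Finset.mem_of_mem_erase (hsub hx)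
  · rintro ⟨ω, v⟩ hp
    simp only [Finset.mem_sigma] at hp
    simp [Finset.insert_erase hp.2]
  · rintro ⟨v, ω⟩ hp
    simp only [Finset.mem_sigma] at hp
    have hv : v ∉ ω := fun hv => Finset.notMem_erase v R ((Finset.mem_powersetCard.1 hp.2).1 hv)
    simp [Finset.erase_insert hv]
  · rintro ⟨ω, v⟩ hp
    simp only [Finset.mem_sigma] at hp
    simp [Finset.insert_erase hp.2]

lemma exp_le_cosh_add {z c u : ℝ} (hc : 0 < c) (hz : |z| ≤ c) :
    Real.exp (u * z) ≤ Real.cosh (u * c) + (z / c) * Real.sinh (u * c) := by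
  obtain ⟨hz1, hz2⟩ := abs_le.1 hz
  set l : ℝ := (z + c) / (2 * c) with hl
  have hl0 : 0 ≤ l := div_nonneg (by linarith) (by linarith)
  have hl1 : 0 ≤ 1 - l := by
    rw [hl]; rw [sub_nonneg, div_le_one (by positivity)]; linarith
  have hsum : l + (1 - l) = 1 := by ring
  have hconv := convexOn_exp.2 (Set.mem_univ (u * c)) (Set.mem_univ (-(u * c))) hl0 hl1 hsum
  simp only [smul_eq_mul] at hconv
  have harg : l * (u * c) + (1 - l) * (-(u * c)) = u * z := by
    rw [hl]; field_simp; ring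
  rw [harg] at hconv
  refine hconv.trans_eq ?_
  rw [Real.cosh_eq, Real.sinh_eq, Real.exp_neg]
  rw [hl]; field_simp
  ring

lemma step_bound {α : Type*} (R : Finset α) (a : α → ℝ) (c u m : ℝ) (hc : 0 < c)
    (hbd : ∀ v ∈ R, |a v - m| ≤ c) (hmean : ∑ v ∈ R, (a v - m) = 0) :
    ∑ v ∈ R, Real.exp (u * (a v - m)) ≤ R.card * Real.exp (u ^ 2 * c ^ 2 / 2) := by
  calc ∑ v ∈ R, Real.exp (u * (a v - m))
      ≤ ∑ v ∈ R, (Real.cosh (u * c) + ((a v - m) / c) * Real.sinh (u * c)) :=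
        Finset.sum_le_sum fun v hv => exp_le_cosh_add hc (hbd v hv)
    _ = R.card * Real.cosh (u * c) := by
        rw [Finset.sum_add_distrib, Finset.sum_const, ← Finset.sum_mul, ← Finset.sum_div,
          hmean]
        simp [nsmul_eq_mul]
    _ ≤ R.card * Real.exp (u ^ 2 * c ^ 2 / 2) := by
        refine mul_le_mul_of_nonneg_left ?_ (by positivity)
        have := Real.cosh_le_exp_half_sq (u * c)
        refine this.trans_eq ?_
        ring_nf

lemma key_mgf {α : Type*} [DecidableEq α] (a : α → ℝ) (c t : ℝ) (hc : 0 < c)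
    (ha : ∀ i, 0 ≤ a i ∧ a i ≤ c) :
    ∀ (k : ℕ) (R : Finset α), k ≤ R.card →
    ∑ ω ∈ R.powersetCard k, Real.exp (t * (∑ i ∈ ω, a i - (k : ℝ) * ((∑ i ∈ R, a i) / (R.card : ℝ))))
      ≤ ((R.powersetCard k).card : ℝ) * Real.exp ((k : ℝ) * (t ^ 2 * c ^ 2 / 2)) := by
  intro k
  induction k with
  | zero => intro R _; simp [Finset.powersetCard_zero]
  | succ k IH =>
    intro R hkR
    rcases Nat.lt_or_ge R.card 2 with h2 | h2
    · -- R.card = 1, k = 0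
      have hr1 : R.card = 1 := by omega
      have hk0 : k = 0 := by omega
      subst hk0
      rw [show (0:ℕ)+1 = R.card from by omega, Finset.powersetCard_self]
      simp [hr1]
      positivity
    · -- main case
      have hcard1 : 1 ≤ R.card := by omega
      have hrR : (2:ℝ) ≤ (R.card:ℝ) := by exact_mod_cast h2
      have hr1pos : (0:ℝ) < (R.card:ℝ) - 1 := by linarith
      have hrpos' : (0:ℝ) < (R.card:ℝ) := by linarith
      have hk_le : (k:ℝ) ≤ (R.card:ℝ) - 1 := by
        have : (k:ℝ) + 1 ≤ (R.card:ℝ) := by exact_mod_cast hkR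
        linarith
      set S : ℝ := ∑ i ∈ R, a i with hSdef
      set m : ℝ := S / (R.card:ℝ) with hmdef
      set l : ℝ := ((R.card:ℝ) - 1 - (k:ℝ)) / ((R.card:ℝ) - 1) with hldef
      have hl0 : 0 ≤ l := div_nonneg (by linarith) (by linarith)
      have hl1 : l ≤ 1 := by rw [hldef, div_le_one hr1pos]; linarith
      have hS0 : 0 ≤ S := Finset.sum_nonneg fun i _ => (ha i).1
      have hm0 : 0 ≤ m := div_nonneg hS0 (le_of_lt hrpos')
      have hmc : m ≤ c := by
        rw [hmdef, div_le_iff₀ hrpos']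
        calc S ≤ ∑ _i ∈ R, c := Finset.sum_le_sum fun i _ => (ha i).2
          _ = (R.card:ℝ) * c := by rw [Finset.sum_const, nsmul_eq_mul]
          _ = c * (R.card:ℝ) := by ring
      have hbd : ∀ v ∈ R, |a v - m| ≤ c := fun v hv =>
        abs_le.2 ⟨by have := (ha v).1; linarith, by have := (ha v).2; linarith⟩
      have hmean : ∑ v ∈ R, (a v - m) = 0 := by
        rw [Finset.sum_sub_distrib, Finset.sum_const, nsmul_eq_mul, ← hSdef, hmdef]
        field_simp; ring
      have hcard_erase : ∀ v ∈ R, (((R.erase v).card) : ℝ) = (R.card:ℝ) - 1 := fun v hv => by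
        rw [Finset.card_erase_of_mem hv, Nat.cast_sub hcard1, Nat.cast_one]
      have hchain : ((k+1:ℕ):ℝ) *
          ∑ ω ∈ R.powersetCard (k+1), Real.exp (t * (∑ i ∈ ω, a i - ((k+1:ℕ):ℝ) * m))
          ≤ ((k+1:ℕ):ℝ) * (((R.powersetCard (k+1)).card : ℝ) *
              Real.exp (((k+1:ℕ):ℝ) * (t^2*c^2/2))) := by
        calc ((k+1:ℕ):ℝ) * ∑ ω ∈ R.powersetCard (k+1),
                Real.exp (t * (∑ i ∈ ω, a i - ((k+1:ℕ):ℝ) * m))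
            = ∑ v ∈ R, ∑ ω ∈ (R.erase v).powersetCard k,
                Real.exp (t * (∑ i ∈ insert v ω, a i - ((k+1:ℕ):ℝ) * m)) :=
              count_identity R k _
          _ = ∑ v ∈ R, ∑ ω ∈ (R.erase v).powersetCard k,
                Real.exp (t * l * (a v - m)) *
                  Real.exp (t * (∑ i ∈ ω, a i -
                    (k:ℝ) * ((∑ i ∈ R.erase v, a i) / (((R.erase v).card) : ℝ)))) := by
              refine Finset.sum_congr rfl fun v hv => Finset.sum_congr rfl fun ω hω => ?_
              have hvω : v ∉ ω := fun h =>
                Finset.notMem_erase v R ((Finset.mem_powersetCard.1 hω).1 h)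
              rw [Finset.sum_insert hvω, ← Real.exp_add]
              congr 1
              have hse : ∑ i ∈ R.erase v, a i = S - a v := by
                rw [hSdef]; exact Finset.sum_erase_eq_sub hv
              rw [hse, hcard_erase v hv, hmdef, hldef]
              have h1 : ((R.card:ℝ) - 1) ≠ 0 := ne_of_gt hr1pos
              have h0 : (R.card:ℝ) ≠ 0 := ne_of_gt hrpos'
              push_cast
              field_simp
              ring
          _ = ∑ v ∈ R, Real.exp (t * l * (a v - m)) *
                ∑ ω ∈ (R.erase v).powersetCard k,
                  Real.exp (t * (∑ i ∈ ω, a i -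
                    (k:ℝ) * ((∑ i ∈ R.erase v, a i) / (((R.erase v).card) : ℝ)))) := by
              exact Finset.sum_congr rfl fun v hv => (Finset.mul_sum _ _ _).symm
          _ ≤ ∑ v ∈ R, Real.exp (t * l * (a v - m)) *
                ((Nat.choose (R.card - 1) k : ℝ) * Real.exp ((k:ℝ) * (t^2*c^2/2))) := by
              refine Finset.sum_le_sum fun v hv => ?_
              refine mul_le_mul_of_nonneg_left ?_ (Real.exp_nonneg _)
              have hIH := IH (R.erase v) (by rw [Finset.card_erase_of_mem hv]; omega)
              rw [Finset.card_erase_of_mem hv]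
              rwa [Finset.card_powersetCard, Finset.card_erase_of_mem hv] at hIH
          _ = (∑ v ∈ R, Real.exp (t * l * (a v - m))) *
                ((Nat.choose (R.card - 1) k : ℝ) * Real.exp ((k:ℝ) * (t^2*c^2/2))) :=
              (Finset.sum_mul _ _ _).symm
          _ ≤ ((R.card:ℝ) * Real.exp ((t*l)^2 * c^2 / 2)) *
                ((Nat.choose (R.card - 1) k : ℝ) * Real.exp ((k:ℝ) * (t^2*c^2/2))) := by
              refine mul_le_mul_of_nonneg_right ?_ (by positivity)
              exact step_bound R a c (t*l) m hc hbd hmean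
          _ ≤ ((R.card:ℝ) * Real.exp (t^2 * c^2 / 2)) *
                ((Nat.choose (R.card - 1) k : ℝ) * Real.exp ((k:ℝ) * (t^2*c^2/2))) := by
              refine mul_le_mul_of_nonneg_right ?_ (by positivity)
              refine mul_le_mul_of_nonneg_left (Real.exp_le_exp.2 ?_) (by positivity)
              have hl2 : l^2 ≤ 1 := by nlinarith
              have ht2 : (t*l)^2 ≤ t^2 := by
                rw [mul_pow]; nlinarith [sq_nonneg t]
              nlinarith [sq_nonneg c]
          _ = ((k+1:ℕ):ℝ) * (((R.powersetCard (k+1)).card : ℝ) *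
                Real.exp (((k+1:ℕ):ℝ) * (t^2*c^2/2))) := by
              rw [Finset.card_powersetCard]
              have hnat : R.card * Nat.choose (R.card - 1) k = Nat.choose R.card (k+1) * (k+1) := by
                have h := Nat.add_one_mul_choose_eq (R.card - 1) k
                rwa [Nat.sub_add_cancel hcard1] at h
              have hcast : (R.card : ℝ) * (Nat.choose (R.card-1) k : ℝ)
                  = (Nat.choose R.card (k+1) : ℝ) * ((k+1:ℕ):ℝ) := by exact_mod_cast hnat
              have hx : t^2*c^2/2 + (k:ℝ)*(t^2*c^2/2) = ((k+1:ℕ):ℝ)*(t^2*c^2/2) := by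
                push_cast; ring
              calc (R.card:ℝ) * Real.exp (t^2*c^2/2) *
                    ((Nat.choose (R.card - 1) k : ℝ) * Real.exp ((k:ℝ) * (t^2*c^2/2)))
                  = ((R.card:ℝ) * (Nat.choose (R.card-1) k : ℝ)) *
                      Real.exp (t^2*c^2/2 + (k:ℝ)*(t^2*c^2/2)) := by
                    rw [Real.exp_add]; ring
                _ = ((k+1:ℕ):ℝ) * ((Nat.choose R.card (k+1) : ℝ) *
                      Real.exp (((k+1:ℕ):ℝ)*(t^2*c^2/2))) := by
                    rw [hcast, hx]; ring
      exact le_of_mul_le_mul_left hchain (by positivity)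

lemma tail_count {α : Type*} [Fintype α] [DecidableEq α] (a : α → ℝ) (c t s : ℝ) (hc : 0 < c)
    (ha : ∀ i, 0 ≤ a i ∧ a i ≤ c) (ht : 0 < t) (q : ℕ) (hq : q ≤ Fintype.card α)
    (P : Finset α → Prop) [DecidablePred P]
    (hP : ∀ ω ∈ (Finset.univ : Finset α).powersetCard q, P ω →
      (q:ℝ) * ((∑ i ∈ (Finset.univ : Finset α), a i) / (((Finset.univ : Finset α).card) : ℝ)) + s
        ≤ ∑ i ∈ ω, a i) :
    (((((Finset.univ : Finset α).powersetCard q).filter P).card) : ℝ)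
      ≤ Real.exp (-(t*s) + (q:ℝ)*(t^2*c^2/2)) *
          ((((Finset.univ : Finset α).powersetCard q).card) : ℝ) := by
  have key := key_mgf a c t hc ha q (Finset.univ : Finset α) (by simpa using hq)
  set m : ℝ := (∑ i ∈ (Finset.univ : Finset α), a i) / (((Finset.univ : Finset α).card) : ℝ)
    with hm
  have h1 : ((((univ : Finset α).powersetCard q).filter P).card : ℝ) * Real.exp (t*s)
      ≤ (((univ : Finset α).powersetCard q).card : ℝ) * Real.exp ((q:ℝ)*(t^2*c^2/2)) := by
    calc ((((univ : Finset α).powersetCard q).filter P).card : ℝ) * Real.exp (t*s)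
        = ∑ _ω ∈ ((univ : Finset α).powersetCard q).filter P, Real.exp (t*s) := by
          rw [Finset.sum_const, nsmul_eq_mul]
      _ ≤ ∑ ω ∈ ((univ : Finset α).powersetCard q).filter P,
            Real.exp (t*(∑ i ∈ ω, a i - (q:ℝ)*m)) := by
          refine Finset.sum_le_sum fun ω hω => Real.exp_le_exp.2 ?_
          obtain ⟨hω1, hω2⟩ := Finset.mem_filter.1 hω
          have h := hP ω hω1 hω2
          exact mul_le_mul_of_nonneg_left (by linarith) ht.le
      _ ≤ ∑ ω ∈ (univ : Finset α).powersetCard q,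
            Real.exp (t*(∑ i ∈ ω, a i - (q:ℝ)*m)) :=
          Finset.sum_le_sum_of_subset_of_nonneg (Finset.filter_subset _ _)
            (fun _ _ _ => Real.exp_nonneg _)
      _ ≤ _ := key
  calc ((((univ : Finset α).powersetCard q).filter P).card : ℝ)
      = (((((univ : Finset α).powersetCard q).filter P).card : ℝ) * Real.exp (t*s)) *
          Real.exp (-(t*s)) := by
        rw [mul_assoc, ← Real.exp_add]; simp
    _ ≤ ((((univ : Finset α).powersetCard q).card : ℝ) * Real.exp ((q:ℝ)*(t^2*c^2/2))) *
          Real.exp (-(t*s)) := mul_le_mul_of_nonneg_right h1 (Real.exp_nonneg _)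
    _ = Real.exp (-(t*s) + (q:ℝ)*(t^2*c^2/2)) *
          ((((univ : Finset α).powersetCard q).card) : ℝ) := by
        rw [mul_assoc, ← Real.exp_add, add_comm]; ring

end Aux

/-- The uniform distribution over all `q`-element subsets of `{1,…,n}` (modeled as `Fin n`). -/
noncomputable def uniformSubsets (n q : ℕ) (h : q ≤ n) : PMF (Finset (Fin n)) :=
  PMF.uniformOfFinset (Finset.powersetCard q (Finset.univ : Finset (Fin n)))
    (Finset.powersetCard_nonempty.mpr (by simpa using h))

section Main
open Finset Real

set_option maxHeartbeats 1000000 in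
/-- **Lemma 3 of the paper.** Let `y ∈ ℝ^n` be nonzero with coherence at most
`μ₁`, i.e. `n ‖y‖_∞² ≤ μ₁ ‖y‖₂²`.  Let `0 < δ₀ < 1`, let `q` be an integer with
`q ≥ 8 μ₁² log(2/δ₀)` and `q ≤ n`, and let `ω` be a uniformly random `q`-element subset of
`{1,…,n}`.  Then with probability at least `1 − δ₀`,
`(1/2)‖y‖₂² ≤ (n/q) ∑_{i∈ω} y i² ≤ (3/2)‖y‖₂²`. -/
theorem stmt2 (n q : ℕ) (y : Fin n → ℝ) (hy : y ≠ 0)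
    (μ₁ : ℝ) (hcoh : ∀ i, (n : ℝ) * (y i) ^ 2 ≤ μ₁ * ∑ i', (y i') ^ 2)
    (δ₀ : ℝ) (hδ0 : 0 < δ₀) (hδ1 : δ₀ < 1)
    (hq : 8 * μ₁ ^ 2 * Real.log (2 / δ₀) ≤ (q : ℝ)) (hqn : q ≤ n) :
    ENNReal.ofReal (1 - δ₀) ≤
      (uniformSubsets n q hqn).toOuterMeasure
        {ω | (1 / 2 : ℝ) * ∑ i, (y i) ^ 2 ≤ (n : ℝ) / (q : ℝ) * ∑ i ∈ ω, (y i) ^ 2 ∧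
          (n : ℝ) / (q : ℝ) * ∑ i ∈ ω, (y i) ^ 2 ≤ (3 / 2 : ℝ) * ∑ i, (y i) ^ 2} := by
  classical
  -- positivity facts
  have hn : 0 < n := by
    rcases Nat.eq_zero_or_pos n with h | h
    · subst h; exact absurd (funext fun i => i.elim0) hy
    · exact h
  have hn' : (0:ℝ) < (n:ℝ) := by exact_mod_cast hn
  obtain ⟨i₀, hi₀⟩ := Function.ne_iff.1 hy
  have hi₀' : y i₀ ≠ 0 := by simpa using hi₀
  set S : ℝ := ∑ i, (y i)^2 with hSdef
  have hS : 0 < S := by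
    have h1 : (y i₀)^2 ≤ S := Finset.single_le_sum (fun i _ => sq_nonneg (y i))
      (Finset.mem_univ i₀)
    have h2 : 0 < (y i₀)^2 := lt_of_le_of_ne (sq_nonneg _) (Ne.symm (pow_ne_zero 2 hi₀'))
    linarith
  have hμ : 0 < μ₁ := by
    have h2 : 0 < (y i₀)^2 := lt_of_le_of_ne (sq_nonneg _) (Ne.symm (pow_ne_zero 2 hi₀'))
    have hμS : 0 < μ₁ * S := lt_of_lt_of_le (by positivity) (hcoh i₀)
    by_contra h
    push_neg at h
    nlinarith
  have hlog : 0 < Real.log (2/δ₀) := Real.log_pos (by rw [lt_div_iff₀ hδ0]; linarith)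
  have hqR : (0:ℝ) < (q:ℝ) := lt_of_lt_of_le (by positivity) hq
  have hq1 : 0 < q := by exact_mod_cast hqR
  -- parameters
  set c : ℝ := μ₁ * S / n with hcdef
  have hc : 0 < c := by positivity
  have ha : ∀ i : Fin n, 0 ≤ (y i)^2 ∧ (y i)^2 ≤ c := fun i =>
    ⟨sq_nonneg _, by rw [hcdef, le_div_iff₀ hn']; nlinarith [hcoh i]⟩
  set t : ℝ := (n:ℝ)/(2*μ₁^2*S) with htdef
  have ht : 0 < t := by positivity
  set sv : ℝ := (q:ℝ)*S/(2*(n:ℝ)) with hsvdef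
  have hexp : -(t*sv) + (q:ℝ)*(t^2*c^2/2) = -((q:ℝ)/(8*μ₁^2)) := by
    rw [htdef, hsvdef, hcdef]
    field_simp
    ring
  have hexp2 : Real.exp (-(t*sv) + (q:ℝ)*(t^2*c^2/2)) ≤ δ₀/2 := by
    rw [hexp]
    have h1 : Real.log (2/δ₀) ≤ (q:ℝ)/(8*μ₁^2) := by
      rw [le_div_iff₀ (by positivity)]
      nlinarith [hq]
    calc Real.exp (-((q:ℝ)/(8*μ₁^2))) ≤ Real.exp (-Real.log (2/δ₀)) :=
          Real.exp_le_exp.2 (by linarith)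
      _ = δ₀/2 := by rw [Real.exp_neg, Real.exp_log (by positivity), inv_div]
  set N : Finset (Finset (Fin n)) := (Finset.univ : Finset (Fin n)).powersetCard q with hNdef
  have hNcard : 0 < N.card := by
    rw [hNdef, Finset.card_powersetCard]
    exact Nat.choose_pos (by simpa using hqn)
  have hNpos : (0:ℝ) < (N.card:ℝ) := by exact_mod_cast hNcard
  -- upper tail
  set Pp : Finset (Fin n) → Prop :=
    fun ω => (q:ℝ)*(S/(n:ℝ)) + sv ≤ ∑ i ∈ ω, (y i)^2 with hPpdef
  have hbadp : ((N.filter Pp).card : ℝ) ≤ δ₀/2 * (N.card:ℝ) := by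
    have h := tail_count (fun i => (y i)^2) c t sv hc ha ht q (by simpa using hqn) Pp ?_
    · refine h.trans ?_
      exact mul_le_mul_of_nonneg_right hexp2 (Nat.cast_nonneg _)
    · intro ω _ hω
      simpa [Finset.card_univ, ← hSdef] using hω
  -- lower tail
  set Pm : Finset (Fin n) → Prop :=
    fun ω => ∑ i ∈ ω, (y i)^2 ≤ (q:ℝ)*(S/(n:ℝ)) - sv with hPmdef
  have hbadm : ((N.filter Pm).card : ℝ) ≤ δ₀/2 * (N.card:ℝ) := by
    have hb : ∀ i : Fin n, 0 ≤ c - (y i)^2 ∧ c - (y i)^2 ≤ c := fun i =>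
      ⟨by linarith [(ha i).2], by linarith [(ha i).1]⟩
    have h := tail_count (fun i => c - (y i)^2) c t sv hc hb ht q (by simpa using hqn) Pm ?_
    · refine h.trans ?_
      exact mul_le_mul_of_nonneg_right hexp2 (Nat.cast_nonneg _)
    · intro ω hωN hω
      have hcard : ω.card = q := (Finset.mem_powersetCard.1 hωN).2
      have hωsum : ∑ i ∈ ω, (c - (y i)^2) = (q:ℝ)*c - ∑ i ∈ ω, (y i)^2 := by
        rw [Finset.sum_sub_distrib, Finset.sum_const, nsmul_eq_mul, hcard]
      have husum : ∑ i ∈ (Finset.univ : Finset (Fin n)), (c - (y i)^2) = (n:ℝ)*c - S := by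
        rw [Finset.sum_sub_distrib, Finset.sum_const, nsmul_eq_mul, ← hSdef]
        simp [Finset.card_univ]
      rw [hωsum, husum]
      have hcardu : (((Finset.univ : Finset (Fin n)).card) : ℝ) = (n:ℝ) := by
        simp [Finset.card_univ]
      rw [hcardu]
      have e1 : (q:ℝ)*(((n:ℝ)*c - S)/(n:ℝ)) = (q:ℝ)*c - (q:ℝ)*(S/(n:ℝ)) := by
        field_simp
      rw [e1]
      simp only [hPmdef] at hω
      linarith
  -- the good event
  set cond : Finset (Fin n) → Prop := fun ω =>
    (1 / 2 : ℝ) * S ≤ (n : ℝ) / (q : ℝ) * ∑ i ∈ ω, (y i) ^ 2 ∧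
      (n : ℝ) / (q : ℝ) * ∑ i ∈ ω, (y i) ^ 2 ≤ (3 / 2 : ℝ) * S with hconddef
  have hsub : N.filter (fun ω => ¬ cond ω) ⊆ N.filter Pm ∪ N.filter Pp := by
    intro ω hω
    obtain ⟨hωN, hnc⟩ := Finset.mem_filter.1 hω
    have hqm : (q:ℝ)*(S/(n:ℝ)) - sv = (q:ℝ)*S/(2*(n:ℝ)) := by
      rw [hsvdef]; field_simp; ring
    have hqp : (q:ℝ)*(S/(n:ℝ)) + sv = 3*((q:ℝ)*S)/(2*(n:ℝ)) := by
      rw [hsvdef]; field_simp; ring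
    simp only [hconddef, not_and_or, not_le] at hnc
    rcases hnc with hlt | hlt
    · refine Finset.mem_union_left _ (Finset.mem_filter.2 ⟨hωN, ?_⟩)
      simp only [hPmdef]
      rw [hqm]
      rw [div_mul_eq_mul_div, div_lt_iff₀ hqR] at hlt
      rw [le_div_iff₀ (by positivity)]
      nlinarith
    · refine Finset.mem_union_right _ (Finset.mem_filter.2 ⟨hωN, ?_⟩)
      simp only [hPpdef]
      rw [hqp]
      have he : (n:ℝ)/(q:ℝ) * (∑ i ∈ ω, (y i)^2) * (q:ℝ) = (n:ℝ) * ∑ i ∈ ω, (y i)^2 := by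
        field_simp
      have hlt' := mul_lt_mul_of_pos_right hlt hqR
      rw [he] at hlt'
      rw [div_le_iff₀ (by positivity)]
      nlinarith
  have hsplit := Finset.card_filter_add_card_filter_not (s := N) (p := cond)
  have hgood : (1 - δ₀) * (N.card:ℝ) ≤ ((N.filter cond).card : ℝ) := by
    have h1 : ((N.filter (fun ω => ¬ cond ω)).card : ℝ)
        ≤ ((N.filter Pm).card : ℝ) + ((N.filter Pp).card : ℝ) := by
      have := (Finset.card_le_card hsub).trans (Finset.card_union_le _ _)
      exact_mod_cast this
    have h2 : ((N.filter cond).card : ℝ) + ((N.filter (fun ω => ¬ cond ω)).card : ℝ)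
        = (N.card : ℝ) := by exact_mod_cast hsplit
    nlinarith
  -- conclude
  show ENNReal.ofReal (1 - δ₀) ≤ (PMF.uniformOfFinset N _).toOuterMeasure _
  rw [PMF.toOuterMeasure_uniformOfFinset_apply]
  have hr : (1 - δ₀) ≤ ((N.filter cond).card : ℝ) / (N.card : ℝ) := by
    rw [le_div_iff₀ hNpos]
    linarith
  have final : ENNReal.ofReal (1 - δ₀) ≤ ((N.filter cond).card : ℝ≥0∞) / (N.card : ℝ≥0∞) := by
    calc ENNReal.ofReal (1 - δ₀)
        ≤ ENNReal.ofReal (((N.filter cond).card : ℝ) / (N.card : ℝ)) :=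
          ENNReal.ofReal_le_ofReal hr
      _ = ((N.filter cond).card : ℝ≥0∞) / (N.card : ℝ≥0∞) := by
          rw [ENNReal.ofReal_div_of_pos hNpos, ENNReal.ofReal_natCast, ENNReal.ofReal_natCast]
  simp only [Set.mem_setOf_eq]
  convert final using 5

end Main
end
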